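/- Duhamel's formula for derivations: let A be a unital complex Banach algebra, δ : A → A a continuous derivation (δ(xy) = δ(x)y + xδ(y)), a ∈ A, and z ∈ ℂ. Then δ(exp(za)) = z ∫_0^1 exp(zsa) δ(a) exp(z(1−s)a) ds. -/

import Mathlib

open NormedSpace intervalIntegral

/-- Duhamel's formula for derivations on a unital complex Banach algebra:
`δ(exp(za)) = z ∫_0^1 exp(zsa) δ(a) exp(z(1−s)a) ds`. -/
theorem duhamel_derivation {A : Type*} [NormedRing A] [NormedAlgebra ℂ A]
    [CompleteSpace A] (δ : A →L[ℂ] A)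
    (hδ : ∀ x y : A, δ (x * y) = δ x * y + x * δ y) (a : A) (z : ℂ) :
    δ (exp (z • a)) =
      z • ∫ s in (0:ℝ)..1,
        exp ((z * (s : ℂ)) • a) * δ a * exp ((z * (1 - (s : ℂ))) • a) := by
  have hδ1 : δ 1 = 0 := by
    have := hδ 1 1
    simp only [mul_one, one_mul] at this
    have h0 := congrArg (fun x => x - δ 1) this
    simpa using h0.symm
  set E : ℝ → A := fun s => exp ((z * (s : ℂ)) • a) with hE
  set G : ℝ → A := fun s => exp ((z * (1 - (s : ℂ))) • a) with hG
  set F : ℝ → A := fun s => E s * δ (G s) with hF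
  -- derivative of E
  have hEderiv : ∀ s : ℝ, HasDerivAt E (z • (E s * a)) s := by
    intro s
    have h1 : HasDerivAt (fun s : ℝ => z * (s : ℂ)) z s := by
      simpa using ((Complex.ofRealCLM.hasDerivAt (x := s)).const_mul z)
    have h2 : HasDerivAt (fun u : ℂ => exp (u • a)) (exp ((z * (s : ℂ)) • a) * a)
        (z * (s : ℂ)) := hasDerivAt_exp_smul_const a (z * (s : ℂ))
    simpa [hE, Function.comp_def] using h2.scomp s h1
  have hGderiv : ∀ s : ℝ, HasDerivAt G ((-z) • (G s * a)) s := by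
    intro s
    have h1 : HasDerivAt (fun s : ℝ => z * (1 - (s : ℂ))) (-z) s := by
      have := ((Complex.ofRealCLM.hasDerivAt (x := s)).const_sub 1).const_mul z
      simpa using this
    have h2 : HasDerivAt (fun u : ℂ => exp (u • a)) (exp ((z * (1 - (s : ℂ))) • a) * a)
        (z * (1 - (s : ℂ))) := hasDerivAt_exp_smul_const a _
    simpa [hG, Function.comp_def] using h2.scomp s h1
  have hcomm : ∀ s : ℝ, E s * a = a * E s := fun s =>
    (((Commute.refl a).smul_right (z * (s : ℂ))).exp_right).symm.eq
  have hFderiv : ∀ s : ℝ, HasDerivAt F (-(z • (E s * δ a * G s))) s := by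
    intro s
    have h := (hEderiv s).mul ((((δ.restrictScalars ℝ).hasFDerivAt (x := G s)).comp_hasDerivAt s (hGderiv s)))
    convert h using 1
    case e'_8 => rfl
    simp only [Function.comp_def, ContinuousLinearMap.coe_restrictScalars']
    have hcm : δ ((-z) • (G s * a)) = (-z) • δ (G s * a) := δ.map_smul _ _
    rw [hcm]
    have : G s * a = a * G s :=
      (((Commute.refl a).smul_right (z * (1 - (s : ℂ)))).exp_right).symm.eq
    rw [this, hδ a (G s)]
    have hea : E s * (a * δ (G s)) = a * (E s * δ (G s)) := by
      rw [← mul_assoc, hcomm s, mul_assoc]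
    simp only [smul_add, mul_add, neg_smul, mul_neg, mul_smul_comm, smul_mul_assoc,
      mul_assoc, hea]
    abel
  have hcont : Continuous fun s : ℝ => E s * δ a * G s := by
    have hc1 : Continuous E :=
      continuous_iff_continuousAt.2 fun s => (hEderiv s).continuousAt
    have hc2 : Continuous G :=
      continuous_iff_continuousAt.2 fun s => (hGderiv s).continuousAt
    exact (hc1.mul continuous_const).mul hc2
  have hint : ∫ s in (0:ℝ)..1, -(z • (E s * δ a * G s)) = F 1 - F 0 :=
    integral_eq_sub_of_hasDerivAt (fun s _ => hFderiv s)
      (((hcont.const_smul z).neg).intervalIntegrable 0 1)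
  have hF1 : F 1 = 0 := by
    simp [hF, hG, hδ1]
  have hF0 : F 0 = δ (exp (z • a)) := by
    simp [hF, hE, hG, exp_zero]
  rw [intervalIntegral.integral_neg, intervalIntegral.integral_smul, hF1, hF0] at hint
  rw [zero_sub] at hint
  exact (neg_inj.mp hint).symm
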